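/- Let A ∈ ℝ^{d₁×d₁} and B ∈ ℝ^{d₂×d₂} be symmetric and C ∈ ℝ^{d₁×d₂}, with B invertible. Suppose that there exist arbitrarily large γ > 0 (i.e., for every γ₀ there is some γ > γ₀) such that every complex eigenvalue λ of J_γ = [[−(1/γ)A, −(1/γ)C], [Cᵀ, B]] satisfies Re(λ) < 0. Then B is negative definite and A − C B^{-1} Cᵀ is positive definite. (That is, up to stationary points where ∇²_{yy}f is degenerate, every point in the lim sup of the sets of strict linearly stable points of γ-GDA as γ → ∞ is a strict local minimax point.) -/

import Mathlib

open Matrix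

noncomputable section

section AuxForStmt16
open Polynomial


/-- coefficients of a product of nonneg-coeff polys are nonneg -/
lemma mul_coeff_nonneg {p q : Polynomial ℝ} (hp : ∀ k, 0 ≤ p.coeff k)
    (hq : ∀ k, 0 ≤ q.coeff k) : ∀ k, 0 ≤ (p * q).coeff k := fun k => by
  rw [Polynomial.coeff_mul]
  exact Finset.sum_nonneg fun x _ => mul_nonneg (hp _) (hq _)

/-- A real polynomial with positive leading coefficient whose complex roots all have
negative real part has nonnegative coefficients. -/
lemma coeff_nonneg_of_roots_neg_re :
    ∀ (n : ℕ) (p : Polynomial ℝ), p.natDegree = n → 0 < p.leadingCoeff →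
      (∀ z : ℂ, aeval z p = 0 → z.re < 0) → ∀ k, 0 ≤ p.coeff k := by
  intro n
  induction n using Nat.strong_induction_on with
  | _ n IH =>
    intro p hdeg hlc hroots k
    rcases Nat.eq_zero_or_pos n with hn | hn
    · subst hn
      rcases Nat.eq_zero_or_pos k with hk | hk
      · have : p.coeff 0 = p.leadingCoeff := by
          rw [Polynomial.leadingCoeff, hdeg]
        rw [hk, this]; exact hlc.le
      · rw [Polynomial.coeff_eq_zero_of_natDegree_lt (hdeg ▸ hk)]
    · have hp0 : p ≠ 0 := Polynomial.leadingCoeff_ne_zero.mp hlc.ne'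
      have hdegpos : 0 < p.degree := by
        rw [Polynomial.degree_eq_natDegree hp0, hdeg]
        exact_mod_cast hn
      have hmapdeg : 0 < (p.map (algebraMap ℝ ℂ)).degree := by
        rwa [Polynomial.degree_map]
      obtain ⟨z, hz⟩ := Complex.exists_root hmapdeg
      have hz' : aeval z p = 0 := by
        rwa [Polynomial.aeval_def, Polynomial.eval₂_eq_eval_map]
      have hre : z.re < 0 := hroots z hz'
      by_cases him : z.im = 0
      · -- real root
        set a := z.re with ha
        have hza : z = (a : ℂ) := Complex.ext rfl him
        have heval : p.eval a = 0 := by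
          have := hz'
          rw [hza] at this
          have h2 : ((p.eval a : ℝ) : ℂ) = 0 := by
            rw [← this]
            exact (Polynomial.aeval_ofReal p a).symm
          exact_mod_cast h2
        obtain ⟨q, hq⟩ := (Polynomial.dvd_iff_isRoot.mpr heval)
        have hq0 : q ≠ 0 := fun h => hp0 (by rw [hq, h, mul_zero])
        have hXa : (Polynomial.X - Polynomial.C a) ≠ 0 := Polynomial.X_sub_C_ne_zero a
        have hlq : q.leadingCoeff = p.leadingCoeff := by
          rw [hq, Polynomial.leadingCoeff_mul, Polynomial.monic_X_sub_C a, one_mul]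
        have hndeg : p.natDegree = 1 + q.natDegree := by
          rw [hq, Polynomial.natDegree_mul hXa hq0, Polynomial.natDegree_X_sub_C]
        have hqroots : ∀ z : ℂ, aeval z q = 0 → z.re < 0 := by
          intro w hw
          apply hroots w
          rw [hq, _root_.map_mul, hw, mul_zero]
        have hqcoeff : ∀ k, 0 ≤ q.coeff k :=
          IH q.natDegree (by omega) q rfl (hlq ▸ hlc) hqroots
        have hXcoeff : ∀ k, 0 ≤ (Polynomial.X - Polynomial.C a).coeff k := by
          intro k
          rw [sub_eq_add_neg, ← Polynomial.C_neg]
          match k with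
          | 0 => simp; linarith
          | 1 => simp
          | (k+2) => simp [Polynomial.coeff_X, Polynomial.coeff_C]
        rw [hq]
        exact mul_coeff_nonneg hXcoeff hqcoeff k
      · -- complex root
        obtain ⟨q, hq⟩ := p.quadratic_dvd_of_aeval_eq_zero_im_ne_zero hz' him
        set Q : Polynomial ℝ :=
          Polynomial.X ^ 2 - Polynomial.C (2 * z.re) * Polynomial.X
            + Polynomial.C (‖z‖ ^ 2) with hQdef
        have hQdeg : Q.natDegree = 2 := by
          rw [hQdef]; compute_degree!
        have hQc : ∀ k, Q.coeff k =
            (Polynomial.X ^ 2 : Polynomial ℝ).coeff k - (2 * z.re) * (Polynomial.X : Polynomial ℝ).coeff k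
              + (Polynomial.C (‖z‖ ^ 2) : Polynomial ℝ).coeff k := by
          intro k
          rw [hQdef, Polynomial.coeff_add, Polynomial.coeff_sub, Polynomial.coeff_C_mul]
        have hQmonic : Q.Monic := by
          have : Q.coeff 2 = 1 := by
            rw [hQc 2, Polynomial.coeff_X_pow, Polynomial.coeff_X, Polynomial.coeff_C]
            norm_num
          rwa [Polynomial.Monic, Polynomial.leadingCoeff, hQdeg]
        have hQ0 : Q ≠ 0 := hQmonic.ne_zero
        have hq0 : q ≠ 0 := fun h => hp0 (by rw [hq, h, mul_zero])
        have hlq : q.leadingCoeff = p.leadingCoeff := by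
          rw [hq, Polynomial.leadingCoeff_mul, hQmonic.leadingCoeff, one_mul]
        have hndeg : p.natDegree = 2 + q.natDegree := by
          rw [hq, Polynomial.natDegree_mul hQ0 hq0, hQdeg]
        have hqroots : ∀ w : ℂ, aeval w q = 0 → w.re < 0 := by
          intro w hw
          apply hroots w
          rw [hq, _root_.map_mul, hw, mul_zero]
        have hqcoeff : ∀ k, 0 ≤ q.coeff k :=
          IH q.natDegree (by omega) q rfl (hlq ▸ hlc) hqroots
        have hQcoeff : ∀ k, 0 ≤ Q.coeff k := by
          intro k
          rw [hQc k]
          match k with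
          | 0 =>
            rw [Polynomial.coeff_X_pow, Polynomial.coeff_X, Polynomial.coeff_C]
            norm_num
          | 1 =>
            rw [Polynomial.coeff_X_pow, Polynomial.coeff_X, Polynomial.coeff_C]
            norm_num
            linarith
          | 2 =>
            rw [Polynomial.coeff_X_pow, Polynomial.coeff_X, Polynomial.coeff_C]
            norm_num
          | (k+3) =>
            rw [Polynomial.coeff_X_pow, Polynomial.coeff_X, Polynomial.coeff_C]
            simp
        rw [hq]
        exact mul_coeff_nonneg hQcoeff hqcoeff k

/-- A monic polynomial with nonnegative coefficients is positive at positive reals. -/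
lemma eval_pos_of_coeff_nonneg {p : Polynomial ℝ} (hm : p.Monic)
    (hc : ∀ k, 0 ≤ p.coeff k) {t : ℝ} (ht : 0 < t) : 0 < p.eval t := by
  rw [Polynomial.eval_eq_sum_range]
  have hmem : p.natDegree ∈ Finset.range (p.natDegree + 1) := by
    simp
  have hsingle : p.coeff p.natDegree * t ^ p.natDegree ≤
      ∑ i ∈ Finset.range (p.natDegree + 1), p.coeff i * t ^ i := by
    apply Finset.single_le_sum (f := fun i => p.coeff i * t ^ i) _ hmem
    intro i _
    exact mul_nonneg (hc i) (pow_nonneg ht.le i)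
  have : p.coeff p.natDegree * t ^ p.natDegree = t ^ p.natDegree := by
    rw [hm.coeff_natDegree, one_mul]
  calc (0:ℝ) < t ^ p.natDegree := pow_pos ht _
    _ = p.coeff p.natDegree * t ^ p.natDegree := this.symm
    _ ≤ _ := hsingle

/-- evaluation of the characteristic polynomial. -/
lemma charpoly_eval' {n : Type*} [DecidableEq n] [Fintype n] {R : Type*} [CommRing R]
    (M : Matrix n n R) (r : R) :
    M.charpoly.eval r = (Matrix.scalar n r - M).det := by
  rw [Matrix.charpoly, _root_.eval_det, Matrix.matPolyEquiv_charmatrix]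
  simp

/-- scaling the first block row of a block matrix scales the determinant -/
lemma det_fromBlocks_smul_top {d₁ d₂ : ℕ} {R : Type*} [CommRing R] (e : R)
    (P : Matrix (Fin d₁) (Fin d₁) R) (Q : Matrix (Fin d₁) (Fin d₂) R)
    (S : Matrix (Fin d₂) (Fin d₁) R) (T : Matrix (Fin d₂) (Fin d₂) R) :
    (Matrix.fromBlocks (e • P) (e • Q) S T).det =
      e ^ d₁ * (Matrix.fromBlocks P Q S T).det := by
  have hmul : Matrix.fromBlocks (e • P) (e • Q) S T =
      Matrix.fromBlocks (e • (1 : Matrix (Fin d₁) (Fin d₁) R)) 0 0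
        (1 : Matrix (Fin d₂) (Fin d₂) R) * Matrix.fromBlocks P Q S T := by
    rw [Matrix.fromBlocks_multiply]
    congr 1 <;> simp [Matrix.smul_mul]
  rw [hmul, Matrix.det_mul, Matrix.det_fromBlocks_zero₂₁, Matrix.det_one, mul_one,
    Matrix.det_smul, Matrix.det_one, mul_one, Fintype.card_fin]

/-- a symmetric real matrix with unit determinant and nonneg charpoly coefficients
has negative definite negation...: `-M` is posdef. -/
lemma neg_posDef_of_charpoly_coeff_nonneg {d : ℕ} {M : Matrix (Fin d) (Fin d) ℝ}
    (hsym : M.IsSymm) (hdet : IsUnit M.det)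
    (hcoeff : ∀ k, 0 ≤ M.charpoly.coeff k) : (-M).PosDef := by
  have hherm : (-M).IsHermitian := by
    rw [Matrix.IsHermitian, Matrix.conjTranspose_eq_transpose_of_trivial,
      Matrix.transpose_neg, hsym]
  -- all eigenvalues of -M are positive
  have heig : ∀ i, 0 < hherm.eigenvalues i := by
    intro i
    set μ := hherm.eigenvalues i with hμ
    by_contra hle
    push_neg at hle
    set v : Fin d → ℝ := ⇑(hherm.eigenvectorBasis i) with hv
    have hv0 : v ≠ 0 := by
      intro h
      exact hherm.eigenvectorBasis.orthonormal.ne_zero i (by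
        apply PiLp.ext
        intro j
        exact congrFun h j)
    have hmv : (-M) *ᵥ v = μ • v := hherm.mulVec_eigenvectorBasis i
    have hMv : M *ᵥ v = -(μ • v) := by
      rw [← hmv, Matrix.neg_mulVec, neg_neg]
    have hker : (Matrix.scalar (Fin d) (-μ) - M) *ᵥ v = 0 := by
      rw [Matrix.sub_mulVec, hMv]
      have h1 : Matrix.scalar (Fin d) (-μ) *ᵥ v = (-μ) • v := by
        ext j
        simp [Matrix.scalar, Matrix.mulVec_diagonal]
      rw [h1]
      simp
    have hdet0 : (Matrix.scalar (Fin d) (-μ) - M).det = 0 := by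
      rw [← Matrix.exists_mulVec_eq_zero_iff]
      exact ⟨v, hv0, hker⟩
    have heval : M.charpoly.eval (-μ) = 0 := by
      rw [charpoly_eval', hdet0]
    rcases lt_or_eq_of_le hle with hlt | heq
    · have : 0 < M.charpoly.eval (-μ) :=
        eval_pos_of_coeff_nonneg M.charpoly_monic hcoeff (by linarith)
      rw [heval] at this
      exact lt_irrefl 0 this
    · have hc0 : M.charpoly.coeff 0 ≠ 0 := by
        intro h
        have := Matrix.det_eq_sign_charpoly_coeff M
        rw [h, mul_zero] at this
        rw [this] at hdet
        exact (by simpa using hdet : False)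
      rw [heq, neg_zero] at heval
      apply hc0
      rw [Polynomial.coeff_zero_eq_eval_zero]
      exact heval
  have hpsd : (-M).PosSemidef :=
    hherm.posSemidef_iff_eigenvalues_nonneg.mpr (fun i => (heig i).le)
  rw [Matrix.posDef_iff_dotProduct_mulVec]
  refine ⟨hherm, fun x hx => ?_⟩
  rcases lt_or_eq_of_le ((Matrix.posSemidef_iff_dotProduct_mulVec.mp hpsd).2 x) with h | h
  · exact h
  · exfalso
    have hz : (-M) *ᵥ x = 0 := (hpsd.dotProduct_mulVec_zero_iff x).mp h.symm
    have hdetneg : IsUnit (-M).det := by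
      rw [Matrix.det_neg]
      exact ((isUnit_one.neg).pow _).mul hdet
    have hinj : Function.Injective ((-M).mulVec) :=
      Matrix.mulVec_injective_iff_isUnit.mpr ((Matrix.isUnit_iff_isUnit_det _).mpr hdetneg)
    apply hx
    have : (-M) *ᵥ x = (-M) *ᵥ 0 := by rw [hz, Matrix.mulVec_zero]
    exact hinj this

/-- If a real polynomial is nonneg at arbitrarily small positive arguments,
it is nonneg at `0`. -/
lemma eval_zero_nonneg_of_eval_nonneg {p : Polynomial ℝ}
    (h : ∀ δ > (0:ℝ), ∃ x, 0 < x ∧ x < δ ∧ 0 ≤ p.eval x) : 0 ≤ p.eval 0 := by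
  by_contra hneg
  push_neg at hneg
  have hc : ContinuousAt (fun x : ℝ => p.eval x) 0 := p.continuous.continuousAt
  obtain ⟨δ, hδpos, hδ⟩ := Metric.continuousAt_iff.mp hc (-p.eval 0) (by linarith)
  obtain ⟨x, hx0, hxδ, hxev⟩ := h δ hδpos
  have hd : dist x 0 < δ := by rwa [Real.dist_eq, sub_zero, abs_of_pos hx0]
  have := hδ hd
  rw [Real.dist_eq] at this
  rcases abs_lt.mp this with ⟨h1, h2⟩
  linarith

set_option maxHeartbeats 1000000 in
theorem aux_main {d₁ d₂ : ℕ}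
    (A : Matrix (Fin d₁) (Fin d₁) ℝ) (B : Matrix (Fin d₂) (Fin d₂) ℝ)
    (W : Matrix (Fin d₁) (Fin d₂) ℝ)
    (hA : A.IsSymm) (hB : B.IsSymm) (hBdet : IsUnit B.det)
    (hstable : ∀ γ₀ > (0 : ℝ), ∃ γ > γ₀, ∀ lam : ℂ,
      ((Matrix.fromBlocks ((-(1 / γ)) • A) ((-(1 / γ)) • W) Wᵀ B).map
          fun r : ℝ => (r : ℂ)).charpoly.IsRoot lam →
        lam.re < 0) :
    (-B).PosDef ∧ (A - W * B⁻¹ * Wᵀ).PosDef := by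
  classical
  have hBinv : Invertible B := B.invertibleOfIsUnitDet hBdet
  set J : ℝ → Matrix (Fin d₁ ⊕ Fin d₂) (Fin d₁ ⊕ Fin d₂) ℝ :=
    fun ε => Matrix.fromBlocks ((-ε) • A) ((-ε) • W) Wᵀ B with hJdef
  set Gr : ℝ → Matrix (Fin d₁ ⊕ Fin d₂) (Fin d₁ ⊕ Fin d₂) (Polynomial ℝ) :=
    fun ε => Matrix.fromBlocks
      ((Polynomial.X : Polynomial ℝ) • 1 + A.map ⇑(Polynomial.C : ℝ →+* Polynomial ℝ))
      (W.map ⇑(Polynomial.C : ℝ →+* Polynomial ℝ))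
      (-(Wᵀ.map ⇑(Polynomial.C : ℝ →+* Polynomial ℝ)))
      (((Polynomial.C ε * Polynomial.X : Polynomial ℝ)) • 1 -
        B.map ⇑(Polynomial.C : ℝ →+* Polynomial ℝ)) with hGrdef
  set G : ℝ → Polynomial ℝ := fun ε => (Gr ε).det with hGdef
  -- arbitrarily small good ε
  have hε : ∀ δ > (0:ℝ), ∃ ε : ℝ, 0 < ε ∧ ε < δ ∧ ∀ lam : ℂ,
      (((J ε).map ⇑(algebraMap ℝ ℂ)).charpoly).IsRoot lam → lam.re < 0 := by
    intro δ hδ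
    obtain ⟨γ, hγ, hroots⟩ := hstable (max (1/δ) 1)
      (lt_of_lt_of_le one_pos (le_max_right _ _))
    have hγ1 : (1:ℝ) < γ := lt_of_le_of_lt (le_max_right _ _) hγ
    have hγ0 : (0:ℝ) < γ := by linarith
    refine ⟨1/γ, by positivity, ?_, ?_⟩
    · have h1δ : 1/δ < γ := lt_of_le_of_lt (le_max_left _ _) hγ
      rw [div_lt_iff₀ hγ0]
      rw [div_lt_iff₀ hδ] at h1δ
      nlinarith
    · intro lam hlam
      apply hroots lam
      convert hlam using 3
      rfl
  -- evaluation of G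
  have hGeval : ∀ ε t : ℝ, (G ε).eval t =
      (Matrix.fromBlocks (t • 1 + A) W (-Wᵀ) ((ε * t) • 1 - B)).det := by
    intro ε t
    show Polynomial.eval t (Gr ε).det = _
    rw [show Polynomial.eval t (Gr ε).det = (Polynomial.evalRingHom t) (Gr ε).det from rfl,
      RingHom.map_det]
    congr 1
    rw [hGrdef]
    simp only [RingHom.mapMatrix_apply]
    ext (i | i) (j | j) <;>
      (simp [Matrix.map_apply, Matrix.smul_apply, smul_eq_mul, Matrix.one_apply,
        apply_ite]; try ring)
  -- the key coefficient positivity for good ε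
  have hkey : ∀ ε : ℝ, 0 < ε →
      (∀ lam : ℂ, (((J ε).map ⇑(algebraMap ℝ ℂ)).charpoly).IsRoot lam → lam.re < 0) →
      (∀ k, 0 ≤ ((J ε).charpoly).coeff k) ∧ (∀ k, 0 ≤ (G ε).coeff k) := by
    intro ε hε0 hroots
    have hmapcp : ((J ε).map ⇑(algebraMap ℝ ℂ)).charpoly =
        ((J ε).charpoly).map (algebraMap ℝ ℂ) := Matrix.charpoly_map _ _
    have hrootsF : ∀ z : ℂ, Polynomial.aeval z ((J ε).charpoly) = 0 → z.re < 0 := by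
      intro z hz
      apply hroots z
      rw [hmapcp]
      show Polynomial.eval z _ = 0
      rw [← Polynomial.eval₂_eq_eval_map, ← Polynomial.aeval_def]
      exact hz
    have hF : ∀ k, 0 ≤ ((J ε).charpoly).coeff k := by
      apply coeff_nonneg_of_roots_neg_re ((J ε).charpoly).natDegree _ rfl
      · rw [(Matrix.charpoly_monic (J ε)).leadingCoeff]
        exact one_pos
      · exact hrootsF
    refine ⟨hF, ?_⟩
    -- the rescaled polynomial
    set q : Polynomial ℝ := ((J ε).charpoly).comp (Polynomial.C ε * Polynomial.X) with hqdef
    have hcomp : q = Polynomial.C (ε ^ d₁) * G ε := by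
      apply Polynomial.funext
      intro t
      rw [hqdef, Polynomial.eval_comp, Polynomial.eval_mul, Polynomial.eval_C,
        Polynomial.eval_X, charpoly_eval', Polynomial.eval_mul, Polynomial.eval_C,
        hGeval ε t]
      have hblock : Matrix.scalar (Fin d₁ ⊕ Fin d₂) (ε * t) - J ε =
          Matrix.fromBlocks (ε • (t • 1 + A)) (ε • W) (-Wᵀ) ((ε * t) • 1 - B) := by
        rw [hJdef, Matrix.scalar_apply]
        ext (i | i) (j | j) <;>
          (simp [Matrix.diagonal_apply, Matrix.one_apply, Matrix.smul_apply,
            smul_eq_mul, Matrix.sub_apply, apply_ite, mul_ite]; try split_ifs) <;>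
          try ring
      rw [hblock, det_fromBlocks_smul_top]
    have hqlead : 0 < q.leadingCoeff := by
      rw [hqdef, Polynomial.leadingCoeff_comp
        (by rw [Polynomial.natDegree_C_mul_X ε hε0.ne']; exact one_ne_zero),
        (Matrix.charpoly_monic (J ε)).leadingCoeff, Polynomial.leadingCoeff_C_mul_X,
        one_mul]
      exact pow_pos hε0 _
    have hqroots : ∀ z : ℂ, Polynomial.aeval z q = 0 → z.re < 0 := by
      intro z hz
      rw [hqdef, Polynomial.aeval_comp] at hz
      have hval : (Polynomial.aeval z) (Polynomial.C ε * Polynomial.X) =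
          (ε : ℂ) * z := by
        simp
      rw [hval] at hz
      have := hrootsF _ hz
      rw [Complex.re_ofReal_mul] at this
      nlinarith
    have hqc : ∀ k, 0 ≤ q.coeff k :=
      coeff_nonneg_of_roots_neg_re q.natDegree q rfl hqlead hqroots
    intro k
    have := hqc k
    rw [hcomp, Polynomial.coeff_C_mul] at this
    nlinarith [pow_pos hε0 d₁]
  -- master polynomial for charpoly (J ε)
  have hFmaster : ∀ ε : ℝ, ((fromBlocks
      ((-(Polynomial.X : Polynomial ℝ)) • A.map ⇑(Polynomial.C : ℝ →+* Polynomial ℝ))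
      ((-(Polynomial.X : Polynomial ℝ)) • W.map ⇑(Polynomial.C : ℝ →+* Polynomial ℝ))
      (Wᵀ.map ⇑(Polynomial.C : ℝ →+* Polynomial ℝ))
      (B.map ⇑(Polynomial.C : ℝ →+* Polynomial ℝ))).charpoly).map
        (Polynomial.evalRingHom ε) = (J ε).charpoly := by
    intro ε
    rw [← Matrix.charpoly_map]
    congr 1
    rw [Matrix.fromBlocks_map, hJdef]
    simp only
    ext (i | i) (j | j) <;>
      (simp [Matrix.map_apply, Matrix.smul_apply, smul_eq_mul]; try ring)
  -- master polynomial for G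
  have hGmaster : ∀ ε : ℝ, ((fromBlocks
      ((Polynomial.X : Polynomial (Polynomial ℝ)) • 1 + A.map ⇑((Polynomial.C : Polynomial ℝ →+* Polynomial (Polynomial ℝ)).comp (Polynomial.C : ℝ →+* Polynomial ℝ)))
      (W.map ⇑((Polynomial.C : Polynomial ℝ →+* Polynomial (Polynomial ℝ)).comp (Polynomial.C : ℝ →+* Polynomial ℝ)))
      (-(Wᵀ.map ⇑((Polynomial.C : Polynomial ℝ →+* Polynomial (Polynomial ℝ)).comp (Polynomial.C : ℝ →+* Polynomial ℝ))))
      (((Polynomial.C (Polynomial.X : Polynomial ℝ) * Polynomial.X : Polynomial (Polynomial ℝ))) • 1 -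
        B.map ⇑((Polynomial.C : Polynomial ℝ →+* Polynomial (Polynomial ℝ)).comp (Polynomial.C : ℝ →+* Polynomial ℝ)))).det).map
        (Polynomial.evalRingHom ε) = G ε := by
    intro ε
    rw [show ∀ p : Polynomial (Polynomial ℝ), p.map (Polynomial.evalRingHom ε) =
      (Polynomial.mapRingHom (Polynomial.evalRingHom ε)) p from fun p => rfl]
    rw [RingHom.map_det]
    show _ = (Gr ε).det
    congr 1
    rw [hGrdef]
    simp only [RingHom.mapMatrix_apply]
    ext (i | i) (j | j) <;>
      (simp [Matrix.map_apply, Matrix.smul_apply, smul_eq_mul, Matrix.one_apply,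
        apply_ite, Polynomial.map_add, Polynomial.map_mul, Polynomial.map_one,
        Polynomial.map_X, Polynomial.map_C]; try ring)
  -- abstract master polynomials
  have hPex : ∃ P : Polynomial (Polynomial ℝ), ∀ ε k,
      ((J ε).charpoly).coeff k = (P.coeff k).eval ε := by
    refine ⟨(fromBlocks
      ((-(Polynomial.X : Polynomial ℝ)) • A.map ⇑(Polynomial.C : ℝ →+* Polynomial ℝ))
      ((-(Polynomial.X : Polynomial ℝ)) • W.map ⇑(Polynomial.C : ℝ →+* Polynomial ℝ))
      (Wᵀ.map ⇑(Polynomial.C : ℝ →+* Polynomial ℝ))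
      (B.map ⇑(Polynomial.C : ℝ →+* Polynomial ℝ))).charpoly, ?_⟩
    intro ε k
    rw [← hFmaster ε, Polynomial.coeff_map]
    rfl
  obtain ⟨P, hP⟩ := hPex
  have hQex : ∃ Q : Polynomial (Polynomial ℝ), ∀ ε k,
      (G ε).coeff k = (Q.coeff k).eval ε := by
    refine ⟨(fromBlocks
      ((Polynomial.X : Polynomial (Polynomial ℝ)) • 1 + A.map ⇑((Polynomial.C : Polynomial ℝ →+* Polynomial (Polynomial ℝ)).comp (Polynomial.C : ℝ →+* Polynomial ℝ)))
      (W.map ⇑((Polynomial.C : Polynomial ℝ →+* Polynomial (Polynomial ℝ)).comp (Polynomial.C : ℝ →+* Polynomial ℝ)))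
      (-(Wᵀ.map ⇑((Polynomial.C : Polynomial ℝ →+* Polynomial (Polynomial ℝ)).comp (Polynomial.C : ℝ →+* Polynomial ℝ))))
      (((Polynomial.C (Polynomial.X : Polynomial ℝ) * Polynomial.X : Polynomial (Polynomial ℝ))) • 1 -
        B.map ⇑((Polynomial.C : Polynomial ℝ →+* Polynomial (Polynomial ℝ)).comp (Polynomial.C : ℝ →+* Polynomial ℝ)))).det, ?_⟩
    intro ε k
    rw [← hGmaster ε, Polynomial.coeff_map]
    rfl
  obtain ⟨Q, hQ⟩ := hQex
  -- limits
  have hBcoeff : ∀ k, 0 ≤ ((J 0).charpoly).coeff k := by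
    intro k
    rw [hP 0 k]
    apply eval_zero_nonneg_of_eval_nonneg
    intro δ hδ
    obtain ⟨ε, h1, h2, h3⟩ := hε δ hδ
    exact ⟨ε, h1, h2, by rw [← hP ε k]; exact (hkey ε h1 h3).1 k⟩
  have hGcoeff : ∀ k, 0 ≤ (G 0).coeff k := by
    intro k
    rw [hQ 0 k]
    apply eval_zero_nonneg_of_eval_nonneg
    intro δ hδ
    obtain ⟨ε, h1, h2, h3⟩ := hε δ hδ
    exact ⟨ε, h1, h2, by rw [← hQ ε k]; exact (hkey ε h1 h3).2 k⟩
  -- J 0 charpoly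
  have hJ0 : (J 0).charpoly = Polynomial.X ^ d₁ * B.charpoly := by
    have h1 : J 0 = Matrix.fromBlocks 0 0 Wᵀ B := by
      rw [hJdef]; simp
    rw [h1, Matrix.charpoly_fromBlocks_zero₁₂]
    congr 1
    rw [Matrix.charpoly]
    have h2 : Matrix.charmatrix (0 : Matrix (Fin d₁) (Fin d₁) ℝ) =
        Matrix.diagonal (fun _ => (Polynomial.X : Polynomial ℝ)) := by
      rw [Matrix.charmatrix]
      simp [Matrix.scalar_apply]
    rw [h2, Matrix.det_diagonal]
    simp
  have hBc : ∀ k, 0 ≤ B.charpoly.coeff k := by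
    intro k
    have := hBcoeff (k + d₁)
    rwa [hJ0, Polynomial.coeff_X_pow_mul] at this
  have hnegB : (-B).PosDef := neg_posDef_of_charpoly_coeff_nonneg hB hBdet hBc
  -- determinant of Schur complement is nonzero
  have hdetS : (A - W * B⁻¹ * Wᵀ).det ≠ 0 := by
    obtain ⟨ε, hε0, -, hroots⟩ := hε 1 one_pos
    have hc0 : (((J ε).map ⇑(algebraMap ℝ ℂ)).charpoly).coeff 0 ≠ 0 := by
      intro h
      have : (((J ε).map ⇑(algebraMap ℝ ℂ)).charpoly).IsRoot 0 := by
        rwa [Polynomial.IsRoot, ← Polynomial.coeff_zero_eq_eval_zero]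
      simpa using hroots 0 this
    have hdetJC : ((J ε).map ⇑(algebraMap ℝ ℂ)).det ≠ 0 := by
      rw [Matrix.det_eq_sign_charpoly_coeff]
      intro h
      rcases mul_eq_zero.mp h with h1 | h1
      · exact pow_ne_zero _ (by norm_num : (-1:ℂ) ≠ 0) h1
      · exact hc0 h1
    have hdetJ : (J ε).det ≠ 0 := by
      intro h
      apply hdetJC
      rw [show (J ε).map ⇑(algebraMap ℝ ℂ) = (algebraMap ℝ ℂ).mapMatrix (J ε) from rfl,
        ← RingHom.map_det, h, map_zero]
    have hform : (J ε).det = B.det * ((-ε) ^ d₁ * (A - W * B⁻¹ * Wᵀ).det) := by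
      rw [hJdef]
      simp only
      rw [Matrix.det_fromBlocks₂₂, Matrix.invOf_eq_nonsing_inv]
      congr 1
      rw [Matrix.smul_mul, Matrix.smul_mul, ← smul_sub, Matrix.det_smul,
        Fintype.card_fin]
    rw [hform] at hdetJ
    intro h
    rw [h, mul_zero, mul_zero] at hdetJ
    exact hdetJ rfl
  -- G 0
  have hG0 : G 0 = Polynomial.C ((-B).det) * (W * B⁻¹ * Wᵀ - A).charpoly := by
    haveI hInvnegB : Invertible (-B) := (-B).invertibleOfIsUnitDet
      (by rw [Matrix.det_neg]; exact ((isUnit_one.neg).pow _).mul hBdet)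
    have hnegBinv : (-B)⁻¹ = -B⁻¹ := Matrix.inv_eq_right_inv
      (by rw [neg_mul_neg, Matrix.mul_nonsing_inv _ hBdet])
    apply Polynomial.funext
    intro t
    rw [Polynomial.eval_mul, Polynomial.eval_C, hGeval 0 t, charpoly_eval']
    simp only [zero_mul, zero_smul, zero_sub]
    rw [Matrix.det_fromBlocks₂₂, Matrix.invOf_eq_nonsing_inv, hnegBinv]
    congr 1
    have hsc : Matrix.scalar (Fin d₁) t = t • (1 : Matrix (Fin d₁) (Fin d₁) ℝ) := by
      rw [Matrix.scalar_apply]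
      ext i j
      simp [Matrix.diagonal_apply, Matrix.one_apply, mul_ite]
    rw [hsc]
    rw [show W * -B⁻¹ * -Wᵀ = W * B⁻¹ * Wᵀ by simp [Matrix.mul_neg, Matrix.neg_mul]]
    abel
  have hSc : ∀ k, 0 ≤ ((W * B⁻¹ * Wᵀ - A).charpoly).coeff k := by
    intro k
    have h1 := hGcoeff k
    rw [hG0, Polynomial.coeff_C_mul] at h1
    have h2 : 0 < (-B).det := hnegB.det_pos
    nlinarith
  have hSsymm : (W * B⁻¹ * Wᵀ - A).IsSymm := by
    have hBi : (B⁻¹)ᵀ = B⁻¹ := by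
      rw [Matrix.transpose_nonsing_inv, hB.eq]
    show _ = _
    rw [Matrix.transpose_sub, Matrix.transpose_mul, Matrix.transpose_mul,
      Matrix.transpose_transpose, hBi, hA.eq, Matrix.mul_assoc]
  have hSdet : IsUnit (W * B⁻¹ * Wᵀ - A).det := by
    rw [isUnit_iff_ne_zero, show W * B⁻¹ * Wᵀ - A = -(A - W * B⁻¹ * Wᵀ) by abel,
      Matrix.det_neg]
    intro h
    rcases mul_eq_zero.mp h with h1 | h1
    · exact pow_ne_zero _ (by norm_num : (-1:ℝ) ≠ 0) h1
    · exact hdetS h1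
  have hS : (-(W * B⁻¹ * Wᵀ - A)).PosDef :=
    neg_posDef_of_charpoly_coeff_nonneg hSsymm hSdet hSc
  rw [neg_sub] at hS
  exact ⟨hnegB, hS⟩

end AuxForStmt16

/-- Up to degenerate points, every point in the lim sup of the strict linearly
stable points of `γ-GDA` as `γ → ∞` is a strict local minimax point: if `A`,
`B` are symmetric, `B` is invertible, and there are arbitrarily large `γ > 0`
such that every complex eigenvalue of `J_γ = [[-(1/γ)A, -(1/γ)C], [Cᵀ, B]]`
has negative real part, then `B` is negative definite and the Schur complement
`A - C B⁻¹ Cᵀ` is positive definite. -/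
theorem stmt_16 {d₁ d₂ : ℕ}
    (A : Matrix (Fin d₁) (Fin d₁) ℝ) (B : Matrix (Fin d₂) (Fin d₂) ℝ)
    (C : Matrix (Fin d₁) (Fin d₂) ℝ)
    (hA : A.IsSymm) (hB : B.IsSymm) (hBdet : IsUnit B.det)
    (hstable : ∀ γ₀ > (0 : ℝ), ∃ γ > γ₀, ∀ lam : ℂ,
      ((Matrix.fromBlocks ((-(1 / γ)) • A) ((-(1 / γ)) • C) Cᵀ B).map
          fun r : ℝ => (r : ℂ)).charpoly.IsRoot lam →
        lam.re < 0) :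
    (-B).PosDef ∧ (A - C * B⁻¹ * Cᵀ).PosDef := by
  exact aux_main A B C hA hB hBdet hstable
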